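/- Let k be a field of characteristic zero, let m, n ∈ ℤ_{≥0}, let a ∈ k*, and let D be the k-derivation on k[x,y] given by D = ∂/∂x + a·x^m·y^{n+1} ∂/∂y, extended to k(x,y). Then k(x,y)^D = k if and only if n = 0. -/
import Mathlib

namespace RatKerAux
open Polynomial
noncomputable section

def innerE (k : Type*) [CommSemiring k] : MvPolynomial (Fin 1) k ≃ₐ[k] Polynomial k :=
  (MvPolynomial.finSuccEquiv k 0).trans
    (Polynomial.mapAlgEquiv (MvPolynomial.isEmptyAlgEquiv k (Fin 0)))

def E (k : Type*) [CommSemiring k] : MvPolynomial (Fin 2) k ≃ₐ[k] Polynomial (Polynomial k) :=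
  ((MvPolynomial.renameEquiv k (Equiv.swap 0 1)).trans (MvPolynomial.finSuccEquiv k 1)).trans
    (Polynomial.mapAlgEquiv (innerE k))

variable {k : Type*} [CommSemiring k]

lemma innerE_X0 : innerE k (MvPolynomial.X 0) = Polynomial.X := by
  rw [innerE]
  simp only [AlgEquiv.trans_apply, MvPolynomial.finSuccEquiv_X_zero,
    Polynomial.coe_mapAlgEquiv, Polynomial.map_X]

@[simp] lemma E_X0 : E k (MvPolynomial.X 0) = Polynomial.C Polynomial.X := by
  have h1 : Equiv.swap (0 : Fin 2) 1 0 = 1 := by decide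
  rw [E]
  simp only [AlgEquiv.trans_apply, MvPolynomial.renameEquiv_apply, MvPolynomial.rename_X, h1]
  have h2 : (MvPolynomial.X (1 : Fin 2) : MvPolynomial (Fin 2) k) = MvPolynomial.X (Fin.succ 0) :=
    rfl
  rw [h2, MvPolynomial.finSuccEquiv_X_succ]
  rw [Polynomial.coe_mapAlgEquiv, Polynomial.map_C]
  congr 1
  exact innerE_X0

@[simp] lemma E_X1 : E k (MvPolynomial.X 1) = Polynomial.X := by
  have h1 : Equiv.swap (0 : Fin 2) 1 1 = 0 := by decide
  rw [E]
  simp only [AlgEquiv.trans_apply, MvPolynomial.renameEquiv_apply, MvPolynomial.rename_X, h1,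
    MvPolynomial.finSuccEquiv_X_zero]
  rw [Polynomial.coe_mapAlgEquiv, Polynomial.map_X]

@[simp] lemma E_C (r : k) : E k (MvPolynomial.C r) = Polynomial.C (Polynomial.C r) := by
  have := (E k).commutes r
  simpa [MvPolynomial.algebraMap_eq, Polynomial.algebraMap_apply] using this

@[simp] lemma E_symm_X : (E k).symm Polynomial.X = MvPolynomial.X 1 := by
  rw [(E k).symm_apply_eq, E_X1]

@[simp] lemma E_symm_CX : (E k).symm (Polynomial.C Polynomial.X) = MvPolynomial.X 0 := by
  rw [(E k).symm_apply_eq, E_X0]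


variable {k' : Type*} [CommRing k']

/-- Conjugate a derivation by an algebra equivalence. -/
def conjDer {A B : Type*} [CommRing A] [CommRing B] [Algebra k' A] [Algebra k' B]
    (e : A ≃ₐ[k'] B) (D : Derivation k' B B) : Derivation k' A A where
  toLinearMap := (e.symm.toLinearMap.comp D.toLinearMap).comp e.toLinearMap
  map_one_eq_zero' := by simp
  leibniz' a b := by
    have h : e.symm (D (e (a * b))) = a * e.symm (D (e b)) + b * e.symm (D (e a)) := by
      rw [map_mul, D.leibniz, map_add, smul_eq_mul, smul_eq_mul, map_mul, map_mul,
        AlgEquiv.symm_apply_apply, AlgEquiv.symm_apply_apply]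
    simpa [smul_eq_mul] using h

lemma conjDer_apply {A B : Type*} [CommRing A] [CommRing B] [Algebra k' A] [Algebra k' B]
    (e : A ≃ₐ[k'] B) (D : Derivation k' B B) (x : A) :
    conjDer e D x = e.symm (D (e x)) := rfl

variable (k' : Type*) [CommRing k']

/-- Coefficient-wise `d/dx` on `k[x][y]`. -/
def del₁ : Derivation k' (Polynomial (Polynomial k')) (Polynomial (Polynomial k')) :=
  PolynomialModule.equivPolynomialSelf.compDer
    ((Polynomial.derivative' (R := k')).mapCoeffs)

@[simp] lemma coeff_del₁ (F : Polynomial (Polynomial k')) (i : ℕ) :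
    (del₁ k' F).coeff i = derivative (F.coeff i) := rfl

/-- Outer `d/dy` on `k[x][y]` as a `k`-derivation. -/
def del₂ : Derivation k' (Polynomial (Polynomial k')) (Polynomial (Polynomial k')) :=
  (Polynomial.derivative' (R := Polynomial k')).restrictScalars k'

@[simp] lemma del₂_apply (F : Polynomial (Polynomial k')) : del₂ k' F = derivative F := rfl

variable {k'}

lemma del₁_C (p : Polynomial k') : del₁ k' (Polynomial.C p) = Polynomial.C (derivative p) := by
  ext i
  rcases eq_or_ne i 0 with rfl | hi
  · simp
  · simp [Polynomial.coeff_C, hi]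

lemma del₁_X : del₁ k' (Polynomial.X : Polynomial (Polynomial k')) = 0 := by
  ext i
  rcases eq_or_ne i 1 with rfl | hi
  · simp
  · simp [Polynomial.coeff_X, hi, Ne.symm hi]

variable {k : Type*} [Field k] [CharZero k]

lemma pderiv0_eq (p : MvPolynomial (Fin 2) k) :
    E k (MvPolynomial.pderiv 0 p) = del₁ k (E k p) := by
  have : (MvPolynomial.pderiv (0 : Fin 2) : Derivation k _ _) = conjDer (E k) (del₁ k) := by
    apply MvPolynomial.derivation_ext
    intro i
    fin_cases i
    · show (MvPolynomial.pderiv (0 : Fin 2)) (MvPolynomial.X 0)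
        = conjDer (E k) (del₁ k) (MvPolynomial.X 0)
      rw [MvPolynomial.pderiv_X_self, conjDer_apply, E_X0, del₁_C, Polynomial.derivative_X,
        Polynomial.C_1, map_one]
    · show (MvPolynomial.pderiv (0 : Fin 2)) (MvPolynomial.X 1)
        = conjDer (E k) (del₁ k) (MvPolynomial.X 1)
      rw [MvPolynomial.pderiv_X_of_ne (by decide), conjDer_apply, E_X1, del₁_X, map_zero]
  rw [this, conjDer_apply, AlgEquiv.apply_symm_apply]

lemma pderiv1_eq (p : MvPolynomial (Fin 2) k) :
    E k (MvPolynomial.pderiv 1 p) = derivative (E k p) := by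
  have : (MvPolynomial.pderiv (1 : Fin 2) : Derivation k _ _) = conjDer (E k) (del₂ k) := by
    apply MvPolynomial.derivation_ext
    intro i
    fin_cases i
    · show (MvPolynomial.pderiv (1 : Fin 2)) (MvPolynomial.X 0)
        = conjDer (E k) (del₂ k) (MvPolynomial.X 0)
      rw [MvPolynomial.pderiv_X_of_ne (by decide), conjDer_apply, E_X0, del₂_apply,
        Polynomial.derivative_C, map_zero]
    · show (MvPolynomial.pderiv (1 : Fin 2)) (MvPolynomial.X 1)
        = conjDer (E k) (del₂ k) (MvPolynomial.X 1)
      rw [MvPolynomial.pderiv_X_self, conjDer_apply, E_X1, del₂_apply,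
        Polynomial.derivative_X, map_one]
  rw [this, conjDer_apply, del₂_apply, AlgEquiv.apply_symm_apply]


lemma masterCoeff (a : k) (m : ℕ) (p : MvPolynomial (Fin 2) k) (i : ℕ) :
    (E k (MvPolynomial.pderiv 0 p
        + (MvPolynomial.C a * MvPolynomial.X (0 : Fin 2) ^ m * MvPolynomial.X 1 ^ (0 + 1))
          • MvPolynomial.pderiv 1 p)).coeff i
      = derivative ((E k p).coeff i)
        + (i : Polynomial k) * (Polynomial.C a * Polynomial.X ^ m) * (E k p).coeff i := by
  have hq : E k (MvPolynomial.C a * MvPolynomial.X (0 : Fin 2) ^ m * MvPolynomial.X 1 ^ (0 + 1))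
      = Polynomial.C (Polynomial.C a * Polynomial.X ^ m) * Polynomial.X := by
    rw [map_mul, map_mul, map_pow, map_pow, E_C, E_X0, E_X1, pow_one, ← Polynomial.C_pow,
      ← Polynomial.C_mul]
  rw [smul_eq_mul, map_add, map_mul, hq, pderiv0_eq, pderiv1_eq]
  rw [Polynomial.coeff_add, coeff_del₁, mul_assoc, Polynomial.coeff_C_mul]
  congr 1
  cases i with
  | zero => simp
  | succ j =>
    rw [Polynomial.coeff_X_mul, Polynomial.coeff_derivative]
    push_cast
    ring


theorem aux_deriv_eq_mul (c w : Polynomial k) (hc : c ≠ 0)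
    (h : derivative c = w * c) : w = 0 ∧ derivative c = 0 := by
  by_cases hd : c.natDegree = 0
  · have h0 : derivative c = 0 := by
      rw [Polynomial.eq_C_of_natDegree_eq_zero hd]; simp
    refine ⟨?_, h0⟩
    rcases mul_eq_zero.mp (h0 ▸ h.symm) with h' | h'
    · exact h'
    · exact absurd h' hc
  · exfalso
    have hdc : derivative c ≠ 0 := fun h0 =>
      hd (Polynomial.natDegree_eq_zero_of_derivative_eq_zero h0)
    have hw : w ≠ 0 := by rintro rfl; rw [zero_mul] at h; exact hdc h
    have h1 : (derivative c).natDegree < c.natDegree := Polynomial.natDegree_derivative_lt hd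
    have h2 : (w * c).natDegree = w.natDegree + c.natDegree := Polynomial.natDegree_mul hw hc
    rw [h, h2] at h1
    omega

theorem aux_darboux (b : Polynomial k) (hb : b ≠ 0)
    (f h : Polynomial (Polynomial k)) (hf : f ≠ 0)
    (hco : ∀ i : ℕ, derivative (f.coeff i) + (i : Polynomial k) * b * f.coeff i
        = (h * f).coeff i) :
    ∃ γ : k, γ ≠ 0 ∧ f = Polynomial.C (Polynomial.C γ) * Polynomial.X ^ f.natDegree
      ∧ h = Polynomial.C ((f.natDegree : Polynomial k) * b) := by
  -- h is constant
  have hhdeg : h.natDegree = 0 := by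
    by_contra hh0
    have hhne : h ≠ 0 := fun h0 => hh0 (by simp [h0])
    have hlead : (h * f).coeff (h.natDegree + f.natDegree) ≠ 0 := by
      rw [Polynomial.coeff_mul_degree_add_degree]
      exact mul_ne_zero (Polynomial.leadingCoeff_ne_zero.mpr hhne)
        (Polynomial.leadingCoeff_ne_zero.mpr hf)
    apply hlead
    rw [← hco]
    have hz : f.coeff (h.natDegree + f.natDegree) = 0 :=
      Polynomial.coeff_eq_zero_of_natDegree_lt (by omega)
    rw [hz]; simp
  set h₀ := h.coeff 0 with hh₀
  have hhC : h = Polynomial.C h₀ := Polynomial.eq_C_of_natDegree_eq_zero hhdeg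
  have key : ∀ i : ℕ, derivative (f.coeff i) = (h₀ - (i : Polynomial k) * b) * f.coeff i := by
    intro i
    have := hco i
    rw [hhC, Polynomial.coeff_C_mul] at this
    linear_combination this
  set d := f.natDegree with hd
  have hcd : f.coeff d ≠ 0 := Polynomial.leadingCoeff_ne_zero.mpr hf
  obtain ⟨hw, hder⟩ := aux_deriv_eq_mul (f.coeff d) _ hcd (key d)
  have hh0b : h₀ = (d : Polynomial k) * b := by linear_combination hw
  have hzero : ∀ i : ℕ, i ≠ d → f.coeff i = 0 := by
    intro i hid
    by_contra hci
    obtain ⟨hw', _⟩ := aux_deriv_eq_mul (f.coeff i) _ hci (key i)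
    have : (d : Polynomial k) * b = (i : Polynomial k) * b := by
      rw [← hh0b]; linear_combination hw'
    have hdi : (d : Polynomial k) = (i : Polynomial k) := mul_right_cancel₀ hb this
    exact hid (Nat.cast_injective hdi).symm
  obtain ⟨γ', hγ'⟩ : ∃ γ' : k, f.coeff d = Polynomial.C γ' :=
    ⟨_, Polynomial.eq_C_of_derivative_eq_zero hder⟩
  refine ⟨γ', fun h0 => hcd (by rw [hγ', h0, map_zero]), ?_, ?_⟩
  · ext i
    rcases eq_or_ne i d with rfl | hid
    · simp [hγ']
    · rw [hzero i hid]
      simp [Polynomial.coeff_X_pow, hid]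
  · rw [hhC, hh0b]
end
end RatKerAux

open MvPolynomial

/-- **Lemma 4.2.** Let `k` be a field of characteristic zero, `m, n ≥ 0` and `a ∈ k*`.
Let `D = ∂x + a x^m y^(n+1) ∂y` on `k[x,y]`, extended to the rational function field
`K = k(x,y)` (the extension `D'` is pinned down by compatibility with `D`).  Then
`k(x,y)^D = k` iff `n = 0`. -/
theorem rational_kernel_trivial_iff_n_eq_zero
    (k : Type*) [Field k] [CharZero k]
    (K : Type*) [Field K] [Algebra (MvPolynomial (Fin 2) k) K]
    [IsFractionRing (MvPolynomial (Fin 2) k) K]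
    [Algebra k K] [IsScalarTower k (MvPolynomial (Fin 2) k) K]
    (m n : ℕ) (a : k) (ha : a ≠ 0)
    (D : Derivation k (MvPolynomial (Fin 2) k) (MvPolynomial (Fin 2) k))
    (hD : D = pderiv 0 + (C a * X 0 ^ m * X 1 ^ (n + 1) : MvPolynomial (Fin 2) k) • pderiv 1)
    (D' : Derivation k K K)
    (hD' : ∀ p : MvPolynomial (Fin 2) k,
      D' (algebraMap (MvPolynomial (Fin 2) k) K p)
        = algebraMap (MvPolynomial (Fin 2) k) K (D p)) :
    (∀ u : K, D' u = 0 ↔ ∃ c : k, u = algebraMap k K c) ↔ n = 0 := by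
  classical
  set R := MvPolynomial (Fin 2) k with hRdef
  set φ := algebraMap R K with hφdef
  have hφinj : Function.Injective φ := IsFractionRing.injective R K
  have hCmap : ∀ r : k, φ (C r) = algebraMap k K r := fun r => by
    rw [IsScalarTower.algebraMap_apply k R K, MvPolynomial.algebraMap_eq]
  have hY : φ (X 1) ≠ 0 := fun h =>
    MvPolynomial.X_ne_zero (1 : Fin 2) (hφinj (by rw [h, map_zero]))
  have hDX1 : D (X 1) = C a * X 0 ^ m * X 1 ^ (n + 1) := by
    rw [hD, Derivation.add_apply, Derivation.smul_apply, MvPolynomial.pderiv_X_self,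
      MvPolynomial.pderiv_X_of_ne (show (1 : Fin 2) ≠ 0 by decide), smul_eq_mul, mul_one,
      zero_add]
  have hDX0 : D (X 0) = 1 := by
    rw [hD, Derivation.add_apply, Derivation.smul_apply, MvPolynomial.pderiv_X_self,
      MvPolynomial.pderiv_X_of_ne (show (0 : Fin 2) ≠ 1 by decide), smul_zero, add_zero]
  constructor
  · -- kernel trivial → n = 0
    intro hker
    by_contra hn
    set Y := φ (X 1) with hYdef
    set Z := φ (X 0) with hZdef
    have hDY : D' Y = algebraMap k K a * Z ^ m * Y ^ (n + 1) := by
      rw [hYdef, hD', hDX1, map_mul, map_mul, map_pow, map_pow, hCmap]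
    have hDZ : D' Z = 1 := by rw [hZdef, hD', hDX0, map_one]
    have hm1 : ((m : k) + 1) ≠ 0 := Nat.cast_add_one_ne_zero m
    set c : k := ↑n * a / ((m : k) + 1) with hcdef
    have hca : c * ((m : k) + 1) = ↑n * a := div_mul_cancel₀ _ hm1
    have hYn : Y ^ n ≠ 0 := pow_ne_zero _ hY
    have hDYn : D' ((Y ^ n)⁻¹) = -(algebraMap k K ((n : k) * a) * Z ^ m) := by
      rw [Derivation.leibniz_inv, Derivation.leibniz_pow, hDY]
      simp only [smul_eq_mul, nsmul_eq_mul, neg_mul]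
      have hp : Y ^ (n - 1) * Y ^ (n + 1) = (Y ^ n) ^ 2 := by
        rw [← pow_add, ← pow_mul]
        congr 1
        omega
      have hinv : ((Y ^ n)⁻¹) ^ 2 * (Y ^ n) ^ 2 = 1 := by
        rw [← mul_pow, inv_mul_cancel₀ hYn, one_pow]
      have hna : algebraMap k K ((n : k) * a) = (n : K) * algebraMap k K a := by
        rw [map_mul, map_natCast]
      rw [hna]
      linear_combination (-(((Y ^ n)⁻¹) ^ 2) * (n : K) * algebraMap k K a * Z ^ m) * hp +
        (-(n : K) * algebraMap k K a * Z ^ m) * hinv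
    have hDZm : D' (algebraMap k K c * Z ^ (m + 1)) = algebraMap k K ((n : k) * a) * Z ^ m := by
      rw [Derivation.leibniz, Derivation.map_algebraMap, Derivation.leibniz_pow, hDZ]
      simp only [smul_eq_mul, nsmul_eq_mul, smul_zero, mul_zero, add_zero, mul_one]
      have hmc : ((m : K) + 1) * algebraMap k K c = algebraMap k K ((n : k) * a) := by
        rw [← hca, map_mul, map_add, map_natCast, map_one]
        ring
      rw [Nat.add_sub_cancel, Nat.cast_add, Nat.cast_one]
      linear_combination Z ^ m * hmc
    set F : K := (Y ^ n)⁻¹ + algebraMap k K c * Z ^ (m + 1) with hFdef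
    have hDF : D' F = 0 := by rw [hFdef, map_add, hDYn, hDZm]; ring
    obtain ⟨c', hc'⟩ := (hker F).mp hDF
    have hmul : (1 : K) + algebraMap k K c * Z ^ (m + 1) * Y ^ n
        = algebraMap k K c' * Y ^ n := by
      have h1 := congrArg (fun t => t * Y ^ n) hc'
      simp only [hFdef] at h1
      have h2 := inv_mul_cancel₀ hYn
      linear_combination h1 - h2
    have hpoly : (1 : R) + C c * X 0 ^ (m + 1) * X 1 ^ n = C c' * X 1 ^ n := by
      apply hφinj
      rw [map_add, map_one, map_mul, map_mul, map_pow, map_pow, hCmap, map_mul, map_pow, hCmap]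
      exact hmul
    have hcc := congrArg MvPolynomial.constantCoeff hpoly
    rw [map_add, map_one, map_mul, map_mul, map_pow, map_pow, map_mul, map_pow] at hcc
    simp [MvPolynomial.constantCoeff_X, zero_pow hn] at hcc
  · -- n = 0 → kernel trivial
    intro hn
    subst hn
    intro u
    constructor
    · intro hu
      by_cases hu0 : u = 0
      · exact ⟨0, by rw [hu0, map_zero]⟩
      set b : Polynomial k := Polynomial.C a * Polynomial.X ^ m with hbdef
      have hb : b ≠ 0 :=
        mul_ne_zero (fun h => ha (by simpa using congrArg (Polynomial.coeff · 0) h))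
          (pow_ne_zero _ Polynomial.X_ne_zero)
      set f := IsFractionRing.num R u with hfdef
      set g := (IsFractionRing.den R u : R) with hgdef
      have hg0 : g ≠ 0 := nonZeroDivisors.coe_ne_zero _
      have hf0 : f ≠ 0 := fun h => hu0 (IsFractionRing.eq_zero_of_num_eq_zero h)
      have hgK : φ g ≠ 0 := fun h => hg0 (hφinj (by rw [h, map_zero]))
      have hfrac : φ f / φ g = u := IsFractionRing.mk'_num_den' R u
      have hfu : φ f = u * φ g := by
        rw [div_eq_iff hgK] at hfrac
        exact hfrac
      have hDrel : g * D f = f * D g := by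
        apply hφinj
        have h1 : φ (D f) = u * φ (D g) := by
          have h2 := congrArg D' hfu
          rw [hD' f, D'.leibniz, hu, smul_zero, add_zero, smul_eq_mul, hD' g] at h2
          exact h2
        rw [map_mul, map_mul, h1, hfu]
        ring
      have hrel : IsRelPrime f g := IsFractionRing.num_den_reduced R u
      have hfDf : f ∣ D f := by
        apply hrel.dvd_of_dvd_mul_left
        rw [hDrel]
        exact dvd_mul_right _ _
      have hgDg : g ∣ D g := by
        apply hrel.symm.dvd_of_dvd_mul_left
        rw [← hDrel]
        exact dvd_mul_right _ _
      obtain ⟨h₁, hh₁⟩ := hfDf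
      obtain ⟨h₂, hh₂⟩ := hgDg
      have hne : h₁ = h₂ := by
        have h3 := hDrel
        rw [hh₁, hh₂] at h3
        exact mul_left_cancel₀ (mul_ne_zero hg0 hf0) (by linear_combination h3)
      have hDform : ∀ p : R, D p = pderiv 0 p
          + (C a * X (0 : Fin 2) ^ m * X 1 ^ (0 + 1)) • pderiv 1 p := fun p => by
        rw [hD, Derivation.add_apply, Derivation.smul_apply]
      have hco : ∀ (p : R), D p = p * h₁ → ∀ i : ℕ,
          Polynomial.derivative ((RatKerAux.E k p).coeff i)
            + (i : Polynomial k) * b * (RatKerAux.E k p).coeff i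
          = ((RatKerAux.E k h₁) * (RatKerAux.E k p)).coeff i := by
        intro p hp i
        have h4 : RatKerAux.E k (D p) = RatKerAux.E k h₁ * RatKerAux.E k p := by
          rw [hp, map_mul, mul_comm]
        calc Polynomial.derivative ((RatKerAux.E k p).coeff i)
              + (i : Polynomial k) * b * (RatKerAux.E k p).coeff i
            = (RatKerAux.E k (pderiv 0 p
                + (C a * X (0 : Fin 2) ^ m * X 1 ^ (0 + 1)) • pderiv 1 p)).coeff i :=
              (RatKerAux.masterCoeff a m p i).symm
          _ = (RatKerAux.E k (D p)).coeff i := by rw [← hDform]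
          _ = ((RatKerAux.E k h₁) * (RatKerAux.E k p)).coeff i := by rw [h4]
      have hF0 : RatKerAux.E k f ≠ 0 := fun h =>
        hf0 ((RatKerAux.E k).injective (by rw [h, map_zero]))
      have hG0 : RatKerAux.E k g ≠ 0 := fun h =>
        hg0 ((RatKerAux.E k).injective (by rw [h, map_zero]))
      obtain ⟨γ₁, hγ₁, hFeq, hHeq₁⟩ :=
        RatKerAux.aux_darboux b hb (RatKerAux.E k f) (RatKerAux.E k h₁) hF0 (hco f hh₁)
      obtain ⟨γ₂, hγ₂, hGeq, hHeq₂⟩ :=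
        RatKerAux.aux_darboux b hb (RatKerAux.E k g) (RatKerAux.E k h₁) hG0
          (hco g (by rw [hh₂, hne]))
      have hdeq : (RatKerAux.E k f).natDegree = (RatKerAux.E k g).natDegree := by
        have h5 := hHeq₁.symm.trans hHeq₂
        have h6 := Polynomial.C_injective h5
        have h7 := mul_right_cancel₀ hb h6
        exact_mod_cast h7
      set d := (RatKerAux.E k f).natDegree with hddef
      have hfX : f = C γ₁ * X 1 ^ d := by
        apply (RatKerAux.E k).injective
        rw [map_mul, map_pow, RatKerAux.E_C, RatKerAux.E_X1, hFeq]
      have hgX : g = C γ₂ * X 1 ^ d := by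
        apply (RatKerAux.E k).injective
        rw [map_mul, map_pow, RatKerAux.E_C, RatKerAux.E_X1, hGeq, hdeq]
      refine ⟨γ₁ / γ₂, ?_⟩
      rw [← hfrac, hfX, hgX, map_mul, map_mul, map_pow, hCmap, hCmap,
        mul_div_mul_right _ _ (pow_ne_zero d hY), map_div₀]
    · rintro ⟨c0, rfl⟩
      rw [← hCmap c0, hD']
      have hDC : D (C c0) = 0 := by
        rw [← MvPolynomial.algebraMap_eq]
        exact D.map_algebraMap c0
      rw [hDC, map_zero]
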